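/- arXiv:1711.05377 — 2 statements merged into one kernel-verified Lean document; each statement's English description precedes it below -/
import Mathlib

section
/- Let (Ω, F, μ) be a probability space, p > 1, and K ≥ 0. Let R_φ, R₁, R̃_φ, R̃₁ : Ω → ℝ be measurable with R₁ > 0 and R̃₁ > 0 μ-almost surely and with |R_φ| ≤ K·R₁ μ-almost surely. Assume |R_φ − R̃_φ|^{2p}, |R₁ − R̃₁|^{2p}, and R̃₁^{-2p} are μ-integrable. Then E_μ |R_φ/R₁ − R̃_φ/R̃₁|^p ≤ 2^{p−1} [ (E_μ|R_φ − R̃_φ|^{2p})^{1/2} + K^p (E_μ|R₁ − R̃₁|^{2p})^{1/2} ] · (E_μ R̃₁^{-2p})^{1/2}. (This is the core decomposition in the proof of Theorem 4.5, converting bounds on the nonnormalized filters ρ_t^ε, ρ̃_t^ε into a bound on the normalized filters π_t^ε(φ) = ρ_t^ε(φ)/ρ_t^ε(1) and π̃_t^ε(φ) = ρ̃_t^ε(φ)/ρ̃_t^ε(1).) -/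
open MeasureTheory Real

lemma aux_rpow_add_le (a b q : ℝ) (ha : 0 ≤ a) (hb : 0 ≤ b) (hq : 1 ≤ q) :
    (a + b) ^ q ≤ 2 ^ (q - 1) * (a ^ q + b ^ q) := by
  have h := NNReal.rpow_add_le_mul_rpow_add_rpow a.toNNReal b.toNNReal hq
  rw [← NNReal.coe_le_coe] at h
  push_cast at h
  rwa [Real.coe_toNNReal a ha, Real.coe_toNNReal b hb] at h


/-- Core decomposition in the proof of Theorem 4.5: converting bounds on the
nonnormalized filters into a bound on the normalized filters
`π(φ) = ρ(φ)/ρ(1)` and `π̃(φ) = ρ̃(φ)/ρ̃(1)`. -/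
theorem normalized_filter_difference_bound
    {Ω : Type*} {mΩ : MeasurableSpace Ω} (μ : Measure Ω) [IsProbabilityMeasure μ]
    (p K : ℝ) (hp : 1 < p) (hK : 0 ≤ K)
    (Rφ R₁ Rtφ Rt₁ : Ω → ℝ)
    (hRφ : Measurable Rφ) (hR₁ : Measurable R₁) (hRtφ : Measurable Rtφ) (hRt₁ : Measurable Rt₁)
    (hR₁pos : ∀ᵐ ω ∂μ, 0 < R₁ ω) (hRt₁pos : ∀ᵐ ω ∂μ, 0 < Rt₁ ω)
    (hdom : ∀ᵐ ω ∂μ, |Rφ ω| ≤ K * R₁ ω)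
    (hint1 : Integrable (fun ω => |Rφ ω - Rtφ ω| ^ (2 * p)) μ)
    (hint2 : Integrable (fun ω => |R₁ ω - Rt₁ ω| ^ (2 * p)) μ)
    (hint3 : Integrable (fun ω => (Rt₁ ω) ^ (-(2 * p))) μ) :
    ∫ ω, |Rφ ω / R₁ ω - Rtφ ω / Rt₁ ω| ^ p ∂μ
      ≤ (2 : ℝ) ^ (p - 1) *
        ((∫ ω, |Rφ ω - Rtφ ω| ^ (2 * p) ∂μ) ^ (1/2 : ℝ)
          + K ^ p * (∫ ω, |R₁ ω - Rt₁ ω| ^ (2 * p) ∂μ) ^ (1/2 : ℝ)) *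
        (∫ ω, (Rt₁ ω) ^ (-(2 * p)) ∂μ) ^ (1/2 : ℝ) := by
  have hp0 : (0 : ℝ) < p := lt_trans one_pos hp
  set A : Ω → ℝ := fun ω => |Rφ ω - Rtφ ω| ^ p with hAdef
  set B : Ω → ℝ := fun ω => |R₁ ω - Rt₁ ω| ^ p with hBdef
  set g : Ω → ℝ := fun ω => (Rt₁ ω) ^ (-p) with hgdef
  have hAm : Measurable A := ((hRφ.sub hRtφ).abs).pow measurable_const
  have hBm : Measurable B := ((hR₁.sub hRt₁).abs).pow measurable_const
  have hgm : Measurable g := hRt₁.pow measurable_const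
  -- squares
  have hAsq : ∀ ω, A ω ^ (2 : ℕ) = |Rφ ω - Rtφ ω| ^ (2 * p) := by
    intro ω
    rw [hAdef, ← Real.rpow_natCast (|Rφ ω - Rtφ ω| ^ p) 2, ← Real.rpow_mul (abs_nonneg _)]
    norm_num [mul_comm]
  have hBsq : ∀ ω, B ω ^ (2 : ℕ) = |R₁ ω - Rt₁ ω| ^ (2 * p) := by
    intro ω
    rw [hBdef, ← Real.rpow_natCast (|R₁ ω - Rt₁ ω| ^ p) 2, ← Real.rpow_mul (abs_nonneg _)]
    norm_num [mul_comm]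
  have hgsq : ∀ᵐ ω ∂μ, g ω ^ (2 : ℕ) = (Rt₁ ω) ^ (-(2 * p)) := by
    filter_upwards [hRt₁pos] with ω hω
    rw [hgdef, ← Real.rpow_natCast ((Rt₁ ω) ^ (-p)) 2, ← Real.rpow_mul hω.le]
    ring_nf
  -- Memℒp 2
  have hA2 : MemLp A 2 μ := by
    rw [memLp_two_iff_integrable_sq hAm.aestronglyMeasurable]
    exact hint1.congr (ae_of_all _ fun ω => (hAsq ω).symm)
  have hB2 : MemLp B 2 μ := by
    rw [memLp_two_iff_integrable_sq hBm.aestronglyMeasurable]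
    exact hint2.congr (ae_of_all _ fun ω => (hBsq ω).symm)
  have hg2 : MemLp g 2 μ := by
    rw [memLp_two_iff_integrable_sq hgm.aestronglyMeasurable]
    exact hint3.congr (hgsq.mono fun ω h => h.symm)
  have hhalf : (1 : ENNReal) / 1 = 1 / 2 + 1 / 2 := by
    rw [ENNReal.div_add_div_same, one_div_one, one_add_one_eq_two]
    exact (ENNReal.div_self two_ne_zero ENNReal.ofNat_ne_top).symm
  have hAg : Integrable (fun ω => A ω * g ω) μ := by
    have := (hg2.smul hA2 : MemLp (A • g) 1 μ).integrable le_rfl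
    exact this
  have hBg : Integrable (fun ω => B ω * g ω) μ := by
    have := (hg2.smul hB2 : MemLp (B • g) 1 μ).integrable le_rfl
    exact this
  -- pointwise bound
  have hpt : ∀ᵐ ω ∂μ,
      |Rφ ω / R₁ ω - Rtφ ω / Rt₁ ω| ^ p
        ≤ 2 ^ (p - 1) * (A ω * g ω + K ^ p * (B ω * g ω)) := by
    filter_upwards [hR₁pos, hRt₁pos, hdom] with ω h1 h2 h3
    have h1' : R₁ ω ≠ 0 := h1.ne'
    have h2' : Rt₁ ω ≠ 0 := h2.ne'
    have hq : |Rφ ω| / |R₁ ω| ≤ K := by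
      rw [abs_of_pos h1, div_le_iff₀ h1]
      exact h3
    have key : |Rφ ω / R₁ ω - Rtφ ω / Rt₁ ω|
        ≤ (|Rφ ω - Rtφ ω| + K * |R₁ ω - Rt₁ ω|) / Rt₁ ω := by
      have e : Rφ ω / R₁ ω - Rtφ ω / Rt₁ ω
          = (Rφ ω - Rtφ ω) / Rt₁ ω - (Rφ ω / R₁ ω) * ((R₁ ω - Rt₁ ω) / Rt₁ ω) := by
        field_simp
        ring
      rw [e]
      calc |(Rφ ω - Rtφ ω) / Rt₁ ω - (Rφ ω / R₁ ω) * ((R₁ ω - Rt₁ ω) / Rt₁ ω)|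
          ≤ |(Rφ ω - Rtφ ω) / Rt₁ ω| + |(Rφ ω / R₁ ω) * ((R₁ ω - Rt₁ ω) / Rt₁ ω)| :=
            abs_sub _ _
        _ = |Rφ ω - Rtφ ω| / Rt₁ ω + |Rφ ω| / |R₁ ω| * (|R₁ ω - Rt₁ ω| / Rt₁ ω) := by
            rw [abs_mul, abs_div, abs_of_pos h2, abs_div, abs_div, abs_of_pos h2]
        _ ≤ |Rφ ω - Rtφ ω| / Rt₁ ω + K * (|R₁ ω - Rt₁ ω| / Rt₁ ω) := by
            gcongr
        _ = (|Rφ ω - Rtφ ω| + K * |R₁ ω - Rt₁ ω|) / Rt₁ ω := by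
            field_simp
    have keyp : |Rφ ω / R₁ ω - Rtφ ω / Rt₁ ω| ^ p
        ≤ ((|Rφ ω - Rtφ ω| + K * |R₁ ω - Rt₁ ω|) / Rt₁ ω) ^ p :=
      Real.rpow_le_rpow (abs_nonneg _) key hp0.le
    have hsum_nn : 0 ≤ |Rφ ω - Rtφ ω| + K * |R₁ ω - Rt₁ ω| := by positivity
    have e2 : ((|Rφ ω - Rtφ ω| + K * |R₁ ω - Rt₁ ω|) / Rt₁ ω) ^ p
        = (|Rφ ω - Rtφ ω| + K * |R₁ ω - Rt₁ ω|) ^ p * g ω := by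
      simp only [hgdef]
      rw [Real.div_rpow hsum_nn h2.le, Real.rpow_neg h2.le, div_eq_mul_inv]
    have e3 : (|Rφ ω - Rtφ ω| + K * |R₁ ω - Rt₁ ω|) ^ p
        ≤ 2 ^ (p - 1) * (A ω + K ^ p * B ω) := by
      have := aux_rpow_add_le (|Rφ ω - Rtφ ω|) (K * |R₁ ω - Rt₁ ω|) p (abs_nonneg _)
        (by positivity) hp.le
      rwa [Real.mul_rpow hK (abs_nonneg _)] at this
    have hg_nn : 0 ≤ g ω := Real.rpow_nonneg h2.le _
    calc |Rφ ω / R₁ ω - Rtφ ω / Rt₁ ω| ^ p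
        ≤ (|Rφ ω - Rtφ ω| + K * |R₁ ω - Rt₁ ω|) ^ p * g ω := by rw [← e2]; exact keyp
      _ ≤ (2 ^ (p - 1) * (A ω + K ^ p * B ω)) * g ω := mul_le_mul_of_nonneg_right e3 hg_nn
      _ = 2 ^ (p - 1) * (A ω * g ω + K ^ p * (B ω * g ω)) := by ring
  -- integrate
  have hIntRHS : Integrable (fun ω => 2 ^ (p - 1) * (A ω * g ω + K ^ p * (B ω * g ω))) μ :=
    (hAg.add (hBg.const_mul _)).const_mul _
  have step1 : ∫ ω, |Rφ ω / R₁ ω - Rtφ ω / Rt₁ ω| ^ p ∂μ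
      ≤ ∫ ω, 2 ^ (p - 1) * (A ω * g ω + K ^ p * (B ω * g ω)) ∂μ :=
    integral_mono_of_nonneg (ae_of_all _ fun ω => Real.rpow_nonneg (abs_nonneg _) p)
      hIntRHS hpt
  have step2 : ∫ ω, 2 ^ (p - 1) * (A ω * g ω + K ^ p * (B ω * g ω)) ∂μ
      = 2 ^ (p - 1) * ((∫ ω, A ω * g ω ∂μ) + K ^ p * ∫ ω, B ω * g ω ∂μ) := by
    rw [integral_const_mul, integral_add hAg (hBg.const_mul _), integral_const_mul]
  -- Hölder / Cauchy-Schwarz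
  have hconj : Real.HolderConjugate 2 2 := ⟨by norm_num, by norm_num, by norm_num⟩
  have hA_nn : 0 ≤ᵐ[μ] A := ae_of_all _ fun ω => Real.rpow_nonneg (abs_nonneg _) _
  have hB_nn : 0 ≤ᵐ[μ] B := ae_of_all _ fun ω => Real.rpow_nonneg (abs_nonneg _) _
  have hg_nn : 0 ≤ᵐ[μ] g := hRt₁pos.mono fun ω h => Real.rpow_nonneg h.le _
  have hofr : ENNReal.ofReal (2 : ℝ) = 2 := by norm_num [ENNReal.ofReal_ofNat]
  have hgint : ∫ ω, g ω ^ (2 : ℝ) ∂μ = ∫ ω, (Rt₁ ω) ^ (-(2 * p)) ∂μ := by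
    refine integral_congr_ae (hgsq.mono fun ω h => ?_)
    show g ω ^ (2 : ℝ) = (Rt₁ ω) ^ (-(2 * p))
    rw [← h, ← Real.rpow_natCast (g ω) 2]; norm_num
  have hCS_A : ∫ ω, A ω * g ω ∂μ
      ≤ (∫ ω, |Rφ ω - Rtφ ω| ^ (2 * p) ∂μ) ^ (1 / 2 : ℝ)
        * (∫ ω, (Rt₁ ω) ^ (-(2 * p)) ∂μ) ^ (1 / 2 : ℝ) := by
    have h := integral_mul_le_Lp_mul_Lq_of_nonneg hconj hA_nn hg_nn
      (by rwa [hofr]) (by rwa [hofr])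
    rw [hgint] at h
    have hA' : ∫ ω, A ω ^ (2 : ℝ) ∂μ = ∫ ω, |Rφ ω - Rtφ ω| ^ (2 * p) ∂μ := by
      refine integral_congr_ae (ae_of_all _ fun ω => ?_)
      show A ω ^ (2 : ℝ) = |Rφ ω - Rtφ ω| ^ (2 * p)
      rw [← hAsq ω, ← Real.rpow_natCast (A ω) 2]; norm_num
    rwa [hA'] at h
  have hCS_B : ∫ ω, B ω * g ω ∂μ
      ≤ (∫ ω, |R₁ ω - Rt₁ ω| ^ (2 * p) ∂μ) ^ (1 / 2 : ℝ)
        * (∫ ω, (Rt₁ ω) ^ (-(2 * p)) ∂μ) ^ (1 / 2 : ℝ) := by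
    have h := integral_mul_le_Lp_mul_Lq_of_nonneg hconj hB_nn hg_nn
      (by rwa [hofr]) (by rwa [hofr])
    rw [hgint] at h
    have hB' : ∫ ω, B ω ^ (2 : ℝ) ∂μ = ∫ ω, |R₁ ω - Rt₁ ω| ^ (2 * p) ∂μ := by
      refine integral_congr_ae (ae_of_all _ fun ω => ?_)
      show B ω ^ (2 : ℝ) = |R₁ ω - Rt₁ ω| ^ (2 * p)
      rw [← hBsq ω, ← Real.rpow_natCast (B ω) 2]; norm_num
    rwa [hB'] at h
  have h2pos : (0 : ℝ) ≤ 2 ^ (p - 1) := Real.rpow_nonneg (by norm_num) _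
  have hKp : (0 : ℝ) ≤ K ^ p := Real.rpow_nonneg hK _
  calc ∫ ω, |Rφ ω / R₁ ω - Rtφ ω / Rt₁ ω| ^ p ∂μ
      ≤ 2 ^ (p - 1) * ((∫ ω, A ω * g ω ∂μ) + K ^ p * ∫ ω, B ω * g ω ∂μ) :=
        step1.trans_eq step2
    _ ≤ 2 ^ (p - 1) *
        ((∫ ω, |Rφ ω - Rtφ ω| ^ (2 * p) ∂μ) ^ (1 / 2 : ℝ)
            * (∫ ω, (Rt₁ ω) ^ (-(2 * p)) ∂μ) ^ (1 / 2 : ℝ)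
          + K ^ p * ((∫ ω, |R₁ ω - Rt₁ ω| ^ (2 * p) ∂μ) ^ (1 / 2 : ℝ)
            * (∫ ω, (Rt₁ ω) ^ (-(2 * p)) ∂μ) ^ (1 / 2 : ℝ))) := by
        gcongr
    _ = (2 : ℝ) ^ (p - 1) *
        ((∫ ω, |Rφ ω - Rtφ ω| ^ (2 * p) ∂μ) ^ (1/2 : ℝ)
          + K ^ p * (∫ ω, |R₁ ω - Rt₁ ω| ^ (2 * p) ∂μ) ^ (1/2 : ℝ)) *
        (∫ ω, (Rt₁ ω) ^ (-(2 * p)) ∂μ) ^ (1/2 : ℝ) := by ring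
end

section
/- Let ε > 0 and let ω : ℝ → ℝ be continuous with ω(0) = 0 and of at most linear growth: there is a constant C ≥ 0 with |ω(t)| ≤ C(1 + |t|) for all t ∈ ℝ. For t ∈ ℝ define the shifted path (θ_t ω)(s) := ω(s + t) − ω(t), and define ξ^ε(ω) := −ε^{−3/2} ∫_{−∞}^0 e^{s/ε} ω(s) ds (the integral converges absolutely). Then for every t ∈ ℝ, ξ^ε(θ_t ω) = ξ^ε(ω) − (1/ε) ∫₀^t ξ^ε(θ_s ω) ds + (1/√ε) ω(t). In other words, the process t ↦ ξ^ε(θ_t ω) is a pathwise solution of the integral form of the fast linear equation dξ^ε = −(1/ε) ξ^ε dt + (1/√ε) dW along the driving path ω, defined for all time. -/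
open MeasureTheory Real

/-- The Wiener shift `(θ_t ω)(s) = ω(s + t) − ω(t)` on scalar paths. -/
def wienerShift (t : ℝ) (ω : ℝ → ℝ) : ℝ → ℝ := fun s => ω (s + t) - ω t

/-- The stationary-solution functional
`ξ^ε(ω) = −ε^{−3/2} ∫_{−∞}^0 e^{s/ε} ω(s) ds` of the fast equation from Section 5. -/
noncomputable def xiMap (ε : ℝ) (ω : ℝ → ℝ) : ℝ :=
  -(ε ^ (-(3 / 2 : ℝ))) * ∫ s in Set.Iio (0 : ℝ), Real.exp (s / ε) * ω s

section Aux

/-- `exp (u * c)` is integrable on `Iic t` for `c > 0`. -/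
lemma aux_integrableOn_exp_mul_Iic {c : ℝ} (hc : 0 < c) (t : ℝ) :
    IntegrableOn (fun u : ℝ => Real.exp (u * c)) (Set.Iic t) := by
  have hc' : c ≠ 0 := hc.ne'
  have hemb : MeasurableEmbedding (fun x : ℝ => x * c) :=
    (Homeomorph.mulRight₀ c hc').measurableEmbedding
  have h1 : IntegrableOn Real.exp (Set.Iic (t * c))
      (Measure.map (fun x : ℝ => x * c) volume) := by
    rw [Real.map_volume_mul_right hc', IntegrableOn, Measure.restrict_smul]
    exact (integrableOn_exp_Iic (t * c)).smul_measure ENNReal.ofReal_ne_top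
  have h2 := hemb.integrableOn_map_iff.mp h1
  have hpre : (fun x : ℝ => x * c) ⁻¹' Set.Iic (t * c) = Set.Iic t := by
    ext x
    simp [Set.mem_preimage, mul_le_mul_iff_of_pos_right hc]
  rwa [hpre] at h2

/-- `exp (u / c)` is integrable on `Iic t` for `c > 0`. -/
lemma aux_integrableOn_exp_div_Iic {c : ℝ} (hc : 0 < c) (t : ℝ) :
    IntegrableOn (fun u : ℝ => Real.exp (u / c)) (Set.Iic t) := by
  simpa [div_eq_mul_inv] using aux_integrableOn_exp_mul_Iic (inv_pos.2 hc) t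

/-- `exp (u / ε) * f u` is integrable on `Iic t` when `f` has at most linear growth. -/
lemma aux_integrableOn_exp_mul_growth {ε : ℝ} (hε : 0 < ε) {f : ℝ → ℝ} (hf : Continuous f)
    {D : ℝ} (hfg : ∀ u, |f u| ≤ D * (1 + |u|)) (t : ℝ) :
    IntegrableOn (fun u => Real.exp (u / ε) * f u) (Set.Iic t) := by
  have hD : 0 ≤ D := by
    have h := (abs_nonneg (f 0)).trans (hfg 0)
    simpa using h
  have h2ε : (0 : ℝ) < 2 * ε := by linarith
  set M : ℝ := D * (Real.exp (t / (2 * ε)) + 2 * ε + |t| * Real.exp (|t| / (2 * ε))) with hM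
  have hMint : IntegrableOn (fun u : ℝ => M * Real.exp (u / (2 * ε))) (Set.Iic t) :=
    (aux_integrableOn_exp_div_Iic h2ε t).const_mul M
  refine Integrable.mono' hMint
    (((Real.continuous_exp.comp (continuous_id.div_const ε)).mul hf).aestronglyMeasurable) ?_
  rw [ae_restrict_iff' measurableSet_Iic]
  refine Filter.Eventually.of_forall fun u hu => ?_
  have hu' : u ≤ t := hu
  have hsplit : Real.exp (u / ε) = Real.exp (u / (2 * ε)) * Real.exp (u / (2 * ε)) := by
    rw [← Real.exp_add]
    congr 1
    field_simp
    ring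
  have hE : (0 : ℝ) < Real.exp (u / (2 * ε)) := Real.exp_pos _
  have key1 : Real.exp (u / (2 * ε)) ≤ Real.exp (t / (2 * ε)) :=
    Real.exp_le_exp.2 (by gcongr)
  have key2 : |u| * Real.exp (u / (2 * ε)) ≤ 2 * ε + |t| * Real.exp (|t| / (2 * ε)) := by
    rcases le_or_gt u 0 with h | h
    · have habs : |u| = -u := abs_of_nonpos h
      have h1 : -u / (2 * ε) + 1 ≤ Real.exp (-u / (2 * ε)) := Real.add_one_le_exp _
      have hprod : Real.exp (u / (2 * ε)) * Real.exp (-u / (2 * ε)) = 1 := by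
        rw [← Real.exp_add, show u / (2 * ε) + -u / (2 * ε) = 0 by ring, Real.exp_zero]
      have hE' : (0 : ℝ) < Real.exp (-u / (2 * ε)) := Real.exp_pos _
      have hmain : -u * Real.exp (u / (2 * ε)) ≤ 2 * ε := by
        have h2 : (-u / (2 * ε) + 1) * Real.exp (u / (2 * ε)) ≤ 1 := by
          calc (-u / (2 * ε) + 1) * Real.exp (u / (2 * ε))
              ≤ Real.exp (-u / (2 * ε)) * Real.exp (u / (2 * ε)) :=
                mul_le_mul_of_nonneg_right h1 hE.le
            _ = 1 := by rw [mul_comm]; exact hprod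
        have h2' : 2 * ε * ((-u / (2 * ε) + 1) * Real.exp (u / (2 * ε))) ≤ 2 * ε * 1 :=
          mul_le_mul_of_nonneg_left h2 h2ε.le
        have hring : 2 * ε * ((-u / (2 * ε) + 1) * Real.exp (u / (2 * ε)))
            = -u * Real.exp (u / (2 * ε)) + 2 * ε * Real.exp (u / (2 * ε)) := by
          field_simp
        rw [hring] at h2'
        have hpos : 0 < 2 * ε * Real.exp (u / (2 * ε)) := mul_pos h2ε hE
        linarith
      have hnn : 0 ≤ |t| * Real.exp (|t| / (2 * ε)) := by positivity
      rw [habs]; linarith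
    · have habs : |u| = u := abs_of_pos h
      have hut : u ≤ |t| := hu'.trans (le_abs_self t)
      have : u * Real.exp (u / (2 * ε)) ≤ |t| * Real.exp (|t| / (2 * ε)) := by
        apply mul_le_mul hut (Real.exp_le_exp.2 (by gcongr)) hE.le (abs_nonneg t)
      rw [habs]; linarith
  have hbound : Real.exp (u / (2 * ε)) * (D * (1 + |u|)) ≤ M := by
    have expand : Real.exp (u / (2 * ε)) * (D * (1 + |u|))
        = D * Real.exp (u / (2 * ε)) + D * (|u| * Real.exp (u / (2 * ε))) := by ring
    rw [expand, hM]
    nlinarith [key1, key2, hD]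
  calc ‖Real.exp (u / ε) * f u‖ = Real.exp (u / ε) * |f u| := by
        rw [Real.norm_eq_abs, abs_mul, abs_of_pos (Real.exp_pos _)]
    _ ≤ Real.exp (u / ε) * (D * (1 + |u|)) := by
        exact mul_le_mul_of_nonneg_left (hfg u) (Real.exp_pos _).le
    _ = Real.exp (u / (2 * ε)) * (Real.exp (u / (2 * ε)) * (D * (1 + |u|))) := by
        rw [hsplit]; ring
    _ ≤ Real.exp (u / (2 * ε)) * M := mul_le_mul_of_nonneg_left hbound hE.le
    _ = M * Real.exp (u / (2 * ε)) := mul_comm _ _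

/-- `∫_{-∞}^0 e^{s/ε} ds = ε`. -/
lemma aux_integral_exp_div_Iic_zero {ε : ℝ} (hε : 0 < ε) :
    ∫ s in Set.Iic (0 : ℝ), Real.exp (s / ε) = ε := by
  have hε' : (ε : ℝ)⁻¹ ≠ 0 := inv_ne_zero hε.ne'
  have hemb : MeasurableEmbedding (fun x : ℝ => x * ε⁻¹) :=
    (Homeomorph.mulRight₀ ε⁻¹ hε').measurableEmbedding
  have h := hemb.setIntegral_map (μ := volume) Real.exp (Set.Iic (0 : ℝ))
  rw [Real.map_volume_mul_right hε'] at h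
  have hpre : (fun x : ℝ => x * ε⁻¹) ⁻¹' Set.Iic (0 : ℝ) = Set.Iic 0 := by
    ext x
    simp only [Set.mem_preimage, Set.mem_Iic]
    constructor
    · intro hx
      by_contra hx'
      push_neg at hx'
      nlinarith [inv_pos.2 hε]
    · intro hx
      exact mul_nonpos_of_nonpos_of_nonneg hx (inv_pos.2 hε).le
  rw [hpre, Measure.restrict_smul, integral_smul_measure] at h
  simp only [integral_exp_Iic, Real.exp_zero] at h
  have habs : |ε⁻¹|⁻¹ = ε := by
    rw [abs_of_pos (inv_pos.2 hε), inv_inv]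
  have hsm : (ENNReal.ofReal |(ε⁻¹)⁻¹|).toReal = ε := by
    rw [inv_inv, abs_of_pos hε, ENNReal.toReal_ofReal hε.le]
  rw [hsm] at h
  have : ∀ x : ℝ, Real.exp (x * ε⁻¹) = Real.exp (x / ε) := fun x => by
    rw [div_eq_mul_inv]
  calc ∫ s in Set.Iic (0 : ℝ), Real.exp (s / ε)
      = ∫ s in Set.Iic (0 : ℝ), Real.exp (s * ε⁻¹) := by
        simp_rw [div_eq_mul_inv]
    _ = ε := by rw [← h]; simp

end Aux

/-- For `ε > 0` and a continuous path `ω` with `ω(0) = 0` of at most linear growth, the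
integral defining `ξ^ε` converges absolutely along every shifted path, and the process
`t ↦ ξ^ε(θ_t ω)` solves pathwise the integral form of the fast linear equation
`dξ^ε = −(1/ε) ξ^ε dt + (1/√ε) dW` along `ω`, for all time. -/
theorem xiMap_shift_solves_fast_linear_equation
    (ε : ℝ) (hε : 0 < ε)
    (ω : ℝ → ℝ) (hcont : Continuous ω) (h0 : ω 0 = 0)
    (C : ℝ) (hC : 0 ≤ C) (hgrow : ∀ t, |ω t| ≤ C * (1 + |t|)) :
    (∀ t : ℝ, IntegrableOn (fun s => Real.exp (s / ε) * (wienerShift t ω) s) (Set.Iio 0)) ∧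
    ∀ t : ℝ, xiMap ε (wienerShift t ω)
      = xiMap ε ω - (1 / ε) * (∫ s in (0 : ℝ)..t, xiMap ε (wienerShift s ω))
        + (1 / Real.sqrt ε) * ω t := by
  -- basic objects
  set F : ℝ → ℝ := fun u => Real.exp (u / ε) * ω u with hF
  have hFcont : Continuous F := (Real.continuous_exp.comp (continuous_id.div_const ε)).mul hcont
  have hFint : ∀ t : ℝ, IntegrableOn F (Set.Iic t) :=
    fun t => aux_integrableOn_exp_mul_growth hε hcont hgrow t
  set H : ℝ → ℝ := fun t => ∫ u in Set.Iic t, F u with hH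
  set g : ℝ → ℝ := fun t => Real.exp (-t / ε) * H t with hg
  -- growth of the shifted path
  have hshift_growth : ∀ t u : ℝ, |wienerShift t ω u| ≤ (2 * C * (1 + |t|)) * (1 + |u|) := by
    intro t u
    have h1 : |ω (u + t)| ≤ C * (1 + |u + t|) := hgrow _
    have h2 : |ω t| ≤ C * (1 + |t|) := hgrow _
    have h3 : |u + t| ≤ |u| + |t| := abs_add_le _ _
    have h4 : |wienerShift t ω u| ≤ |ω (u + t)| + |ω t| := abs_sub _ _
    have h5 : 0 ≤ |u| := abs_nonneg u
    have h6 : 0 ≤ |t| := abs_nonneg t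
    nlinarith [mul_nonneg (mul_nonneg hC h6) h5, mul_nonneg hC h5,
      mul_le_mul_of_nonneg_left h3 hC]
  have hshift_cont : ∀ t : ℝ, Continuous (wienerShift t ω) := fun t =>
    (hcont.comp (continuous_id.add continuous_const)).sub continuous_const
  -- the integrability conjunct
  have hint : ∀ t : ℝ,
      IntegrableOn (fun s => Real.exp (s / ε) * (wienerShift t ω) s) (Set.Iio 0) := by
    intro t
    exact (aux_integrableOn_exp_mul_growth hε (hshift_cont t) (hshift_growth t) 0).mono_set
      Set.Iio_subset_Iic_self
  refine ⟨hint, ?_⟩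
  -- translation identity:  ∫_{Iio 0} e^{s/ε} ω(s+t) ds = e^{-t/ε} H t
  have htrans : ∀ t : ℝ, ∫ s in Set.Iio (0 : ℝ), Real.exp (s / ε) * ω (s + t)
      = Real.exp (-t / ε) * H t := by
    intro t
    have hmp : MeasurePreserving (fun x : ℝ => x + t) volume volume :=
      measurePreserving_add_right volume t
    have hemb : MeasurableEmbedding (fun x : ℝ => x + t) :=
      (Homeomorph.addRight t).measurableEmbedding
    have hpre : (fun x : ℝ => x + t) ⁻¹' Set.Iic t = Set.Iic 0 := by
      ext x; simp
    have h1 : ∫ x in (fun x : ℝ => x + t) ⁻¹' Set.Iic t, F (x + t)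
        = ∫ u in Set.Iic t, F u := hmp.setIntegral_preimage_emb hemb F (Set.Iic t)
    rw [hpre] at h1
    have h2 : ∀ s : ℝ, Real.exp (s / ε) * ω (s + t) = Real.exp (-t / ε) * F (s + t) := by
      intro s
      rw [hF]
      simp only
      rw [← mul_assoc, ← Real.exp_add]
      congr 2
      field_simp
      ring
    calc ∫ s in Set.Iio (0 : ℝ), Real.exp (s / ε) * ω (s + t)
        = ∫ s in Set.Iio (0 : ℝ), Real.exp (-t / ε) * F (s + t) := by
          exact setIntegral_congr_fun measurableSet_Iio fun s _ => h2 s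
      _ = ∫ s in Set.Iic (0 : ℝ), Real.exp (-t / ε) * F (s + t) := by
          rw [← integral_Iic_eq_integral_Iio]
      _ = Real.exp (-t / ε) * ∫ s in Set.Iic (0 : ℝ), F (s + t) := by
          rw [integral_const_mul]
      _ = Real.exp (-t / ε) * H t := by rw [h1, hH]
  -- value of xi along the shift:  xi(θ_t ω) = -K * (g t - ε * ω t)
  set K : ℝ := ε ^ (-(3 / 2 : ℝ)) with hK
  have hxi : ∀ t : ℝ, xiMap ε (wienerShift t ω) = -K * (g t - ε * ω t) := by
    intro t
    have hint1 : IntegrableOn (fun s => Real.exp (s / ε) * ω (s + t)) (Set.Iio 0) := by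
      have := (aux_integrableOn_exp_mul_growth hε
        (hcont.comp (continuous_id.add continuous_const))
        (f := fun u => ω (u + t)) (D := C * (1 + |t|)) ?_ 0).mono_set Set.Iio_subset_Iic_self
      · exact this
      · intro u
        have h1 : |ω (u + t)| ≤ C * (1 + |u + t|) := hgrow _
        have h3 : |u + t| ≤ |u| + |t| := abs_add_le _ _
        have h5 : 0 ≤ |u| := abs_nonneg u
        have h6 : 0 ≤ |t| := abs_nonneg t
        nlinarith [mul_nonneg (mul_nonneg hC h6) h5,
          mul_le_mul_of_nonneg_left h3 hC]
    have hint2 : IntegrableOn (fun s : ℝ => Real.exp (s / ε) * ω t) (Set.Iio 0) :=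
      ((aux_integrableOn_exp_div_Iic hε 0).mono_set Set.Iio_subset_Iic_self).mul_const (ω t)
    have hsplit : ∫ s in Set.Iio (0 : ℝ), Real.exp (s / ε) * (wienerShift t ω) s
        = (∫ s in Set.Iio (0 : ℝ), Real.exp (s / ε) * ω (s + t))
          - ∫ s in Set.Iio (0 : ℝ), Real.exp (s / ε) * ω t := by
      rw [← integral_sub hint1 hint2]
      apply setIntegral_congr_fun measurableSet_Iio
      intro s _
      simp [wienerShift]
      ring
    have hconst : ∫ s in Set.Iio (0 : ℝ), Real.exp (s / ε) * ω t = ε * ω t := by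
      rw [integral_mul_const, ← integral_Iic_eq_integral_Iio, aux_integral_exp_div_Iic_zero hε]
    rw [show xiMap ε (wienerShift t ω)
      = -(ε ^ (-(3 / 2 : ℝ))) * ∫ s in Set.Iio (0 : ℝ),
          Real.exp (s / ε) * (wienerShift t ω) s from rfl, hsplit, htrans t, hconst, ← hK]
  -- H satisfies FTC
  have hHeq : ∀ t : ℝ, H t = H 0 + ∫ u in (0 : ℝ)..t, F u := by
    intro t
    have h := intervalIntegral.integral_Iic_sub_Iic (μ := volume) (hFint 0) (hFint t)
    simp only [hH]
    linarith [h]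
  have hHderiv : ∀ b : ℝ, HasDerivAt H (F b) b := by
    intro b
    have hG : HasDerivAt (fun u => ∫ x in (0 : ℝ)..u, F x) (F b) b :=
      (hFcont.integral_hasStrictDerivAt 0 b).hasDerivAt
    have : H = fun t => H 0 + ∫ u in (0 : ℝ)..t, F u := funext hHeq
    rw [this]
    exact (hG.const_add (H 0))
  -- g satisfies the ODE g' = -(1/ε) g + ω
  have hgderiv : ∀ b : ℝ, HasDerivAt g (-(1 / ε) * g b + ω b) b := by
    intro b
    have he : HasDerivAt (fun t : ℝ => Real.exp (-t / ε)) (Real.exp (-b / ε) * (-(1 / ε))) b := by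
      have h1 : HasDerivAt (fun t : ℝ => -t / ε) (-(1 / ε)) b := by
        have := ((hasDerivAt_id b).neg).div_const ε
        simpa [neg_div] using this
      exact (Real.hasDerivAt_exp (-b / ε)).comp b h1
    have hmul := he.mul (hHderiv b)
    have hval : Real.exp (-b / ε) * (-(1 / ε)) * H b + Real.exp (-b / ε) * F b
        = -(1 / ε) * g b + ω b := by
      have hFb : Real.exp (-b / ε) * F b = ω b := by
        rw [hF]
        simp only
        rw [← mul_assoc, ← Real.exp_add]
        have : -b / ε + b / ε = 0 := by ring
        rw [this, Real.exp_zero, one_mul]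
      rw [hFb, hg]
      ring
    rw [hval] at hmul
    exact hmul
  have hgcont : Continuous g := by
    rw [continuous_iff_continuousAt]
    exact fun b => (hgderiv b).continuousAt
  -- integral form of the ODE
  have hgint : ∀ t : ℝ, g t - g 0
      = -(1 / ε) * (∫ s in (0 : ℝ)..t, g s) + ∫ s in (0 : ℝ)..t, ω s := by
    intro t
    have hcont' : Continuous fun s => -(1 / ε) * g s + ω s :=
      ((continuous_const.mul hgcont)).add hcont
    have h1 : ∫ s in (0 : ℝ)..t, (-(1 / ε) * g s + ω s) = g t - g 0 :=
      intervalIntegral.integral_eq_sub_of_hasDerivAt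
        (fun x _ => hgderiv x) (hcont'.intervalIntegrable 0 t)
    have h2 : ∫ s in (0 : ℝ)..t, (-(1 / ε) * g s + ω s)
        = -(1 / ε) * (∫ s in (0 : ℝ)..t, g s) + ∫ s in (0 : ℝ)..t, ω s := by
      rw [intervalIntegral.integral_add (f := fun s => -(1 / ε) * g s) ((continuous_const.mul hgcont).intervalIntegrable 0 t)
        (hcont.intervalIntegrable 0 t), intervalIntegral.integral_const_mul]
    rw [← h1, h2]
  -- K * ε = 1 / √ε
  have hKε : K * ε = 1 / Real.sqrt ε := by
    have h1 : K * ε = ε ^ (-(1 / 2 : ℝ)) := by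
      rw [hK, show (-(1 / 2 : ℝ)) = -(3 / 2 : ℝ) + 1 by norm_num, Real.rpow_add hε,
        Real.rpow_one]
    have h2 : ε ^ (-(1 / 2 : ℝ)) = 1 / Real.sqrt ε := by
      rw [Real.rpow_neg hε.le, Real.sqrt_eq_rpow]
      exact (one_div _).symm
    rw [h1, h2]
  -- conclude
  intro t
  have hxi0 : xiMap ε ω = -K * g 0 := by
    have : wienerShift 0 ω = ω := by
      funext s
      simp [wienerShift, h0]
    rw [← this, hxi 0, h0]
    ring
  have hIg : (∫ s in (0 : ℝ)..t, xiMap ε (wienerShift s ω))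
      = -K * ((∫ s in (0 : ℝ)..t, g s) - ε * ∫ s in (0 : ℝ)..t, ω s) := by
    have hfun : (fun s => xiMap ε (wienerShift s ω)) = fun s => -K * (g s - ε * ω s) :=
      funext hxi
    rw [hfun]
    rw [intervalIntegral.integral_const_mul]
    congr 1
    rw [intervalIntegral.integral_sub (g := fun s => ε * ω s) (hgcont.intervalIntegrable 0 t)
      ((continuous_const.mul hcont).intervalIntegrable 0 t),
      intervalIntegral.integral_const_mul]
  rw [hxi t, hxi0, hIg, ← hKε]
  linear_combination (-K) * hgint t
    + (K * (∫ s in (0 : ℝ)..t, ω s)) * (one_div_mul_cancel hε.ne')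
end
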